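/- Let g(x) := Σ_{n≥0} ( ∏_{j=0}^{n−1} (3j+1) )·x^n/n! (the formal series (1 − 3x)^{−1/3}) and f(x) := Σ_{n≥1} 3^{n−1}·x^n/n (the formal series −(1/3)·log(1 − 3x)), and let S(n,m) := n!·[x^n]( g(x)·f(x)^m / m! ) be the entries of the generalized signless Stirling1 Sheffer triangle (OEIS A286718). Then in ℚ[[t]] one has Σ_{m≥0} S(m+1, m)·t^m = (1 + 2t)/(1 − t)^3; equivalently, S(m+1, m) = (m+1)(3m+2)/2 for all m ≥ 0 (the pentagonal numbers, A000326(m+1)). -/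

import Mathlib

open PowerSeries

/-- The formal power series `(1 − 3x)^{−1/3} = Σ_n (∏_{j<n}(3j+1))·x^n/n!` over `ℚ`. -/
noncomputable def gA286718 : ℚ⟦X⟧ :=
  PowerSeries.mk fun n => (∏ j ∈ Finset.range n, ((3 * j + 1 : ℕ) : ℚ)) / n.factorial

/-- The formal power series `−(1/3)·log(1 − 3x) = Σ_{n≥1} 3^{n−1}·x^n/n` over `ℚ`. -/
noncomputable def fA286718 : ℚ⟦X⟧ :=
  PowerSeries.mk fun n => if n = 0 then 0 else (3 : ℚ) ^ (n - 1) / n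

/-- The entries of the generalized signless Stirling1 Sheffer triangle A286718,
`((1 − 3s)^{−1/3}, −(1/3)log(1 − 3s))`: `S(n,m) = n!·[x^n](g(x)·f(x)^m / m!)`. -/
noncomputable def A286718 (n m : ℕ) : ℚ :=
  (n.factorial : ℚ) * coeff n (gA286718 * fA286718 ^ m) / m.factorial

noncomputable def hAux : ℚ⟦X⟧ := PowerSeries.mk fun n => (3 : ℚ) ^ n / (n + 1)

lemma f_eq : fA286718 = X * hAux := by
  ext n
  cases n with
  | zero => simp [fA286718, hAux, PowerSeries.coeff_zero_eq_constantCoeff]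
  | succ k =>
    rw [coeff_succ_X_mul]
    simp [fA286718, hAux]

lemma h0 : constantCoeff hAux = 1 := by
  simp [hAux, ← PowerSeries.coeff_zero_eq_constantCoeff]

lemma h1 : coeff 1 hAux = 3 / 2 := by
  simp [hAux]
  norm_num

lemma hpow0 (m : ℕ) : coeff 0 (hAux ^ m) = 1 := by
  rw [PowerSeries.coeff_zero_eq_constantCoeff, map_pow, h0, one_pow]

lemma hpow1 (m : ℕ) : coeff 1 (hAux ^ m) = 3 * m / 2 := by
  induction m with
  | zero => simp
  | succ k ih =>
    rw [pow_succ, coeff_mul]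
    rw [Finset.Nat.antidiagonal_succ]
    simp [Prod.map, hpow0, ih, h1, h0, PowerSeries.coeff_zero_eq_constantCoeff]
    ring

lemma g0 : coeff 0 gA286718 = 1 := by simp [gA286718]
lemma g0' : constantCoeff gA286718 = 1 := by
  rw [← PowerSeries.coeff_zero_eq_constantCoeff]; exact g0
lemma g1 : coeff 1 gA286718 = 1 := by simp [gA286718]

lemma key (m : ℕ) : A286718 (m + 1) m = ((m : ℚ) + 1) * (3 * m + 2) / 2 := by
  have hc : coeff (m + 1) (gA286718 * fA286718 ^ m) = 3 * m / 2 + 1 := by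
    rw [f_eq, mul_pow, ← mul_assoc, mul_comm gA286718 (X ^ m), mul_assoc,
      show m + 1 = 1 + m from by ring, coeff_X_pow_mul]
    rw [coeff_mul, Finset.Nat.antidiagonal_succ]
    simp [Prod.map, g0', g1, hpow0, hpow1, PowerSeries.coeff_zero_eq_constantCoeff]
  unfold A286718
  rw [hc, Nat.factorial_succ]
  have : (m.factorial : ℚ) ≠ 0 := Nat.cast_ne_zero.2 m.factorial_ne_zero
  field_simp
  push_cast
  ring

lemma ogf_aux : (1 - PowerSeries.X : ℚ⟦X⟧) ^ 3
      * PowerSeries.mk (fun m => ((m : ℚ) + 1) * (3 * m + 2) / 2)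
    = 1 + 2 * PowerSeries.X := by
  have h2 : (2 : ℚ⟦X⟧) = C 2 := by rw [map_ofNat]
  have expand : (1 - X : ℚ⟦X⟧) ^ 3
        * PowerSeries.mk (fun m => ((m : ℚ) + 1) * (3 * m + 2) / 2)
      = PowerSeries.mk (fun m => ((m : ℚ) + 1) * (3 * m + 2) / 2)
        - C 3 * (PowerSeries.mk (fun m => ((m : ℚ) + 1) * (3 * m + 2) / 2) * X ^ 1)
        + C 3 * (PowerSeries.mk (fun m => ((m : ℚ) + 1) * (3 * m + 2) / 2) * X ^ 2)
        - PowerSeries.mk (fun m => ((m : ℚ) + 1) * (3 * m + 2) / 2) * X ^ 3 := by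
    rw [show (C 3) = (3 : ℚ⟦X⟧) from by rw [map_ofNat]]
    ring
  rw [expand, h2]
  ext n
  simp only [map_sub, map_add, coeff_C_mul, coeff_mul_X_pow', coeff_mk, coeff_one,
    coeff_C_mul, coeff_X]
  rcases n with _|_|_|n
  · norm_num
  · norm_num
  · norm_num
  · have e1 : n + 1 + 1 + 1 - 1 = n + 2 := rfl
    have e2 : n + 1 + 1 + 1 - 2 = n + 1 := rfl
    have e3 : n + 1 + 1 + 1 - 3 = n := rfl
    norm_num [e1, e2, e3]
    ring_nf


/-- The o.g.f. of the second (`d = 1`) diagonal of the triangle A286718: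
`Σ_m S(m+1,m)·t^m = (1 + 2t)/(1 − t)^3`, equivalently
`S(m+1,m) = (m+1)(3m+2)/2` for all `m ≥ 0` (the pentagonal numbers A000326(m+1)). -/
theorem A286718_diagonal_one_ogf :
    (1 - PowerSeries.X : ℚ⟦X⟧) ^ 3 * PowerSeries.mk (fun m => A286718 (m + 1) m)
        = 1 + 2 * PowerSeries.X
      ∧ ∀ m : ℕ, A286718 (m + 1) m = ((m : ℚ) + 1) * (3 * m + 2) / 2 := by
  refine ⟨?_, key⟩
  have hP : PowerSeries.mk (fun m => A286718 (m + 1) m)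
      = PowerSeries.mk (fun m => ((m : ℚ) + 1) * (3 * m + 2) / 2) := by
    ext n; simp [key]
  rw [hP, ogf_aux]
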